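/- Let α ∈ (1/2,1), d₁ > 0, d₂ ∈ ℝ, v_n = Γ(αn+1)/Γ(αn-α+1), and define a₁ = d₁/v₁ and a_{n+1} = (d₂ a_n + ∑_{k=1}^{n-1} a_k a_{n-k})/v_{n+1} for n ≥ 1. Then there exists A > 0 such that |a_n| ≤ Aⁿ n^(α-1) for all n ≥ 1. In particular, the power series ∑_{n≥1} a_n zⁿ has positive radius of convergence. -/

import Mathlib

open Finset

lemma sum_inv_sqrt_le (m : ℕ) :
    ∑ k ∈ Finset.Ico 1 (m+1), 1 / Real.sqrt k ≤ 2 * Real.sqrt m := by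
  induction m with
  | zero => simp
  | succ m ih =>
    rw [Finset.sum_Ico_succ_top (by omega)]
    have ht : (0:ℝ) < Real.sqrt ((m:ℝ)+1) := Real.sqrt_pos.mpr (by positivity)
    have hs : (0:ℝ) ≤ Real.sqrt m := Real.sqrt_nonneg _
    have hm : Real.sqrt m ^ 2 = (m:ℝ) := Real.sq_sqrt (by positivity)
    have hm1 : Real.sqrt ((m:ℝ)+1) ^ 2 = (m:ℝ)+1 := Real.sq_sqrt (by positivity)
    have h1 : Real.sqrt m * Real.sqrt ((m:ℝ)+1) ≤ (m:ℝ) + 1/2 := by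
      nlinarith [sq_nonneg (Real.sqrt m - Real.sqrt ((m:ℝ)+1))]
    have h2 : 1 / Real.sqrt ((m:ℝ)+1) ≤ 2 * Real.sqrt ((m:ℝ)+1) - 2 * Real.sqrt m := by
      rw [div_le_iff₀ ht]
      nlinarith
    push_cast
    linarith

lemma sum_reflect' (m : ℕ) (f : ℕ → ℝ) :
    ∑ k ∈ Finset.Ico 1 m, f (m - k) = ∑ k ∈ Finset.Ico 1 m, f k := by
  refine Finset.sum_nbij' (fun k => m - k) (fun k => m - k) ?_ ?_ ?_ ?_ ?_ <;>
    first
      | (intro k hk; simp only [Finset.mem_Ico] at hk ⊢; omega)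
      | (intros; rfl)

lemma conv_le (m : ℕ) :
    ∑ k ∈ Finset.Ico 1 m, 1 / (Real.sqrt k * Real.sqrt ((m - k : ℕ))) ≤ 6 := by
  rcases Nat.eq_zero_or_pos m with rfl | hm
  · simp
  have hsm : (0:ℝ) < Real.sqrt m := Real.sqrt_pos.mpr (by positivity)
  have hpt : ∀ k ∈ Finset.Ico 1 m,
      1 / (Real.sqrt k * Real.sqrt ((m - k : ℕ))) ≤
        Real.sqrt 2 / Real.sqrt m * (1 / Real.sqrt k + 1 / Real.sqrt ((m - k : ℕ))) := by
    intro k hk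
    simp only [Finset.mem_Ico] at hk
    have hk1 : (1:ℝ) ≤ (k:ℝ) := by exact_mod_cast hk.1
    have hmk1 : (1:ℝ) ≤ ((m - k : ℕ):ℝ) := by
      have : 1 ≤ m - k := by omega
      exact_mod_cast this
    have hsk : (0:ℝ) < Real.sqrt k := Real.sqrt_pos.mpr (by linarith)
    have hsmk : (0:ℝ) < Real.sqrt ((m - k : ℕ)) := Real.sqrt_pos.mpr (by linarith)
    rcases le_or_gt (2 * k) m with h | h
    · have hms : (m:ℝ) ≤ 2 * ((m - k : ℕ):ℝ) := by
        have : m ≤ 2 * (m - k) := by omega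
        exact_mod_cast this
      have h2 : Real.sqrt m ≤ Real.sqrt 2 * Real.sqrt ((m - k : ℕ)) := by
        rw [← Real.sqrt_mul (by norm_num)]
        exact Real.sqrt_le_sqrt hms
      have key : 1 / Real.sqrt ((m - k : ℕ)) ≤ Real.sqrt 2 / Real.sqrt m := by
        rw [div_le_div_iff₀ hsmk hsm]
        linarith
      calc 1 / (Real.sqrt k * Real.sqrt ((m - k : ℕ)))
          = (1 / Real.sqrt ((m - k : ℕ))) * (1 / Real.sqrt k) := by
            rw [one_div_mul_one_div, mul_comm]
        _ ≤ (Real.sqrt 2 / Real.sqrt m) * (1 / Real.sqrt k) :=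
            mul_le_mul_of_nonneg_right key (by positivity)
        _ ≤ Real.sqrt 2 / Real.sqrt m * (1 / Real.sqrt k + 1 / Real.sqrt ((m - k : ℕ))) := by
            have h3 : (0:ℝ) ≤ 1 / Real.sqrt ((m - k : ℕ)) := by positivity
            have h4 : (0:ℝ) ≤ Real.sqrt 2 / Real.sqrt m := by positivity
            nlinarith
    · have hms : (m:ℝ) ≤ 2 * (k:ℝ) := by exact_mod_cast h.le
      have h2 : Real.sqrt m ≤ Real.sqrt 2 * Real.sqrt k := by
        rw [← Real.sqrt_mul (by norm_num)]
        exact Real.sqrt_le_sqrt hms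
      have key : 1 / Real.sqrt k ≤ Real.sqrt 2 / Real.sqrt m := by
        rw [div_le_div_iff₀ hsk hsm]
        linarith
      calc 1 / (Real.sqrt k * Real.sqrt ((m - k : ℕ)))
          = (1 / Real.sqrt k) * (1 / Real.sqrt ((m - k : ℕ))) := by
            rw [one_div_mul_one_div]
        _ ≤ (Real.sqrt 2 / Real.sqrt m) * (1 / Real.sqrt ((m - k : ℕ))) :=
            mul_le_mul_of_nonneg_right key (by positivity)
        _ ≤ Real.sqrt 2 / Real.sqrt m * (1 / Real.sqrt k + 1 / Real.sqrt ((m - k : ℕ))) := by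
            have h3 : (0:ℝ) ≤ 1 / Real.sqrt k := by positivity
            have h4 : (0:ℝ) ≤ Real.sqrt 2 / Real.sqrt m := by positivity
            nlinarith
  have hmono := Finset.sum_le_sum hpt
  have hsplit : ∑ k ∈ Finset.Ico 1 m,
      Real.sqrt 2 / Real.sqrt m * (1 / Real.sqrt k + 1 / Real.sqrt ((m - k : ℕ)))
      = Real.sqrt 2 / Real.sqrt m *
        ((∑ k ∈ Finset.Ico 1 m, 1 / Real.sqrt k) +
         ∑ k ∈ Finset.Ico 1 m, 1 / Real.sqrt ((m - k : ℕ))) := by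
    rw [← Finset.mul_sum, Finset.sum_add_distrib]
  have hrefl : ∑ k ∈ Finset.Ico 1 m, 1 / Real.sqrt ((m - k : ℕ))
      = ∑ k ∈ Finset.Ico 1 m, 1 / Real.sqrt k :=
    sum_reflect' m (fun j => 1 / Real.sqrt j)
  have hsum : ∑ k ∈ Finset.Ico 1 m, 1 / Real.sqrt k ≤ 2 * Real.sqrt m := by
    have h1 : ∑ k ∈ Finset.Ico 1 m, 1 / Real.sqrt k
        ≤ ∑ k ∈ Finset.Ico 1 (m+1), 1 / Real.sqrt k := by
      apply Finset.sum_le_sum_of_subset_of_nonneg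
      · exact Finset.Ico_subset_Ico le_rfl (by omega)
      · intros; positivity
    exact h1.trans (sum_inv_sqrt_le m)
  have hfin : Real.sqrt 2 / Real.sqrt m * (2 * Real.sqrt m + 2 * Real.sqrt m)
      = 4 * Real.sqrt 2 := by
    field_simp
    ring
  have hs2 : Real.sqrt 2 ≤ 3/2 := by
    nlinarith [Real.sq_sqrt (by norm_num : (0:ℝ) ≤ 2), Real.sqrt_nonneg 2]
  calc ∑ k ∈ Finset.Ico 1 m, 1 / (Real.sqrt k * Real.sqrt ((m - k : ℕ)))
      ≤ ∑ k ∈ Finset.Ico 1 m,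
          Real.sqrt 2 / Real.sqrt m * (1 / Real.sqrt k + 1 / Real.sqrt ((m - k : ℕ))) := hmono
    _ = Real.sqrt 2 / Real.sqrt m *
        ((∑ k ∈ Finset.Ico 1 m, 1 / Real.sqrt k) +
         ∑ k ∈ Finset.Ico 1 m, 1 / Real.sqrt ((m - k : ℕ))) := hsplit
    _ ≤ Real.sqrt 2 / Real.sqrt m * (2 * Real.sqrt m + 2 * Real.sqrt m) := by
        apply mul_le_mul_of_nonneg_left _ (by positivity)
        rw [hrefl]
        linarith
    _ = 4 * Real.sqrt 2 := hfin
    _ ≤ 6 := by linarith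

lemma gamma_interp {y σ : ℝ} (hy : 0 < y) (hσ : 0 < σ) (hσ1 : σ < 1) :
    Real.Gamma (y + σ) ≤ Real.Gamma y * y ^ σ := by
  have hG : 0 < Real.Gamma y := Real.Gamma_pos_of_pos hy
  have h := Real.Gamma_mul_add_mul_le_rpow_Gamma_mul_rpow_Gamma hy
    (by linarith : (0:ℝ) < y + 1) (by linarith : (0:ℝ) < 1 - σ) hσ (by ring)
  rw [show (1-σ)*y + σ*(y+1) = y + σ by ring, Real.Gamma_add_one hy.ne'] at h
  calc Real.Gamma (y+σ) ≤ Real.Gamma y ^ (1-σ) * (y * Real.Gamma y) ^ σ := h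
    _ = (Real.Gamma y ^ (1-σ) * Real.Gamma y ^ σ) * y ^ σ := by
        rw [Real.mul_rpow hy.le hG.le]; ring
    _ = Real.Gamma y * y ^ σ := by
        rw [← Real.rpow_add hG]
        norm_num

lemma v_lower (α t : ℝ) (hα1 : 1/2 < α) (hα2 : α < 1) (ht2 : 2 ≤ t) :
    Real.sqrt t / 3 ≤ Real.Gamma (α*t+1) / Real.Gamma (α*t-α+1) := by
  set x : ℝ := α*t - α + 1 with hx
  have hxpos : (0:ℝ) < x := by rw [hx]; nlinarith
  have hxα : α*t + 1 = x + α := by rw [hx]; ring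
  have hxαpos : (0:ℝ) < x + α := by linarith
  have hGx : 0 < Real.Gamma x := Real.Gamma_pos_of_pos hxpos
  have hGxα : 0 < Real.Gamma (x + α) := Real.Gamma_pos_of_pos hxαpos
  have h1 : Real.Gamma ((x+α) + (1-α)) ≤ Real.Gamma (x+α) * (x+α) ^ (1-α) :=
    gamma_interp (y := x+α) (σ := 1-α) hxαpos (by linarith) (by linarith)
  rw [show (x + α) + (1 - α) = x + 1 by ring, Real.Gamma_add_one hxpos.ne'] at h1
  have hxα1 : (1:ℝ) ≤ x + α := by rw [hx]; nlinarith
  have h2 : (x+α) ^ (1-α) ≤ Real.sqrt (x+α) := by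
    rw [Real.sqrt_eq_rpow]
    exact Real.rpow_le_rpow_of_exponent_le hxα1 (by linarith)
  have h3 : Real.sqrt (x+α) ≤ Real.sqrt 2 * Real.sqrt t := by
    rw [← Real.sqrt_mul (by norm_num)]
    apply Real.sqrt_le_sqrt
    rw [hx]; nlinarith
  have h4 : t/2 ≤ x := by rw [hx]; nlinarith
  have ht : (0:ℝ) < Real.sqrt t := Real.sqrt_pos.mpr (by linarith)
  have hsq : Real.sqrt t ^ 2 = t := Real.sq_sqrt (by linarith)
  have hsqrt2 : Real.sqrt 2 ≤ 3/2 := by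
    nlinarith [Real.sq_sqrt (by norm_num : (0:ℝ) ≤ 2), Real.sqrt_nonneg 2]
  rw [hxα, le_div_iff₀ hGx]
  have c2 : Real.Gamma (x+α) * ((x+α) ^ (1-α)) ≤ Real.Gamma (x+α) * Real.sqrt (x+α) :=
    mul_le_mul_of_nonneg_left h2 hGxα.le
  have c3 : Real.Gamma (x+α) * Real.sqrt (x+α)
      ≤ Real.Gamma (x+α) * (Real.sqrt 2 * Real.sqrt t) :=
    mul_le_mul_of_nonneg_left h3 hGxα.le
  have c4 : Real.Gamma (x+α) * (Real.sqrt 2 * Real.sqrt t)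
      ≤ Real.Gamma (x+α) * ((3/2) * Real.sqrt t) := by
    apply mul_le_mul_of_nonneg_left _ hGxα.le
    nlinarith
  have c5 : t/2 * Real.Gamma x ≤ x * Real.Gamma x :=
    mul_le_mul_of_nonneg_right h4 hGx.le
  nlinarith [ht, hGx, hGxα]

/-- Geometric-type upper bound `|a_n| ≤ A^n n^(α-1)` for the coefficients of the
fractional power series solution of the fractional Riccati equation
`D^α f = d₁ + d₂ f + f²`; in particular the power series `∑ a_n zⁿ` has positive
radius of convergence. -/
theorem riccati_coeff_upper_bound (α d₁ d₂ : ℝ) (hα : α ∈ Set.Ioo (1/2 : ℝ) 1)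
    (hd₁ : 0 < d₁) (v a : ℕ → ℝ)
    (hv : ∀ n : ℕ, v n = Real.Gamma (α * n + 1) / Real.Gamma (α * n - α + 1))
    (ha1 : a 1 = d₁ / v 1)
    (harec : ∀ n : ℕ, 1 ≤ n →
      a (n + 1) = (d₂ * a n + ∑ k ∈ Finset.Ico 1 n, a k * a (n - k)) / v (n + 1)) :
    (∃ A > (0:ℝ), ∀ n : ℕ, 1 ≤ n → |a n| ≤ A ^ n * (n : ℝ) ^ (α - 1)) ∧
    (∃ r : ℝ, 0 < r ∧ Summable fun n : ℕ => |a n| * r ^ n) := by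
  obtain ⟨hα1, hα2⟩ := hα
  obtain ⟨B, hB1, hBa, hBd⟩ : ∃ B : ℝ, 1 ≤ B ∧ |a 1| ≤ B ∧ 3 * (|d₂| + 6) ≤ B :=
    ⟨max (max 1 (|a 1|)) (3 * (|d₂| + 6)),
      le_trans (le_max_left _ _) (le_max_left _ _),
      le_trans (le_max_right _ _) (le_max_left _ _), le_max_right _ _⟩
  have hBpos : (0:ℝ) < B := lt_of_lt_of_le one_pos hB1
  have hBnn : (0:ℝ) ≤ B := hBpos.le
  -- The key inductive bound
  have key : ∀ n : ℕ, 1 ≤ n → |a n| ≤ B ^ n / Real.sqrt n := by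
    intro n
    induction n using Nat.strong_induction_on with
    | _ n ih =>
      intro hn
      rcases n with _ | n
      · omega
      rcases n with _ | m
      · -- base case n = 1
        simpa using hBa
      · -- step : n = m + 2
        have hrec := harec (m+1) (by omega)
        -- lower bound on v (m+2)
        have ht2 : (2:ℝ) ≤ ((m+2:ℕ):ℝ) := by exact_mod_cast (by omega : 2 ≤ m+2)
        have hvlb : Real.sqrt ((m+2:ℕ):ℝ) / 3 ≤ v (m+2) := by
          rw [hv (m+2)]
          exact v_lower α ((m+2:ℕ):ℝ) hα1 hα2 ht2
        have htpos : (0:ℝ) < Real.sqrt ((m+2:ℕ):ℝ) := Real.sqrt_pos.mpr (by linarith)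
        have hvpos : (0:ℝ) < v (m+2) := lt_of_lt_of_le (by positivity) hvlb
        -- bound the convolution terms
        have hNk : ∀ k ∈ Finset.Ico 1 (m+1),
            |a k * a (m+1-k)| ≤ B^(m+1) * (1/(Real.sqrt k * Real.sqrt ((m+1-k : ℕ)))) := by
          intro k hk
          simp only [Finset.mem_Ico] at hk
          have h1 := ih k (by omega) hk.1
          have h2 := ih (m+1-k) (by omega) (by omega)
          have hk1 : (1:ℝ) ≤ (k:ℝ) := by exact_mod_cast hk.1
          have hmk1 : (1:ℝ) ≤ ((m+1-k:ℕ):ℝ) := by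
            have : 1 ≤ m+1-k := by omega
            exact_mod_cast this
          have hsk : (0:ℝ) < Real.sqrt k := Real.sqrt_pos.mpr (by linarith)
          have hsmk : (0:ℝ) < Real.sqrt ((m+1-k:ℕ)) := Real.sqrt_pos.mpr (by linarith)
          rw [abs_mul]
          calc |a k| * |a (m+1-k)|
              ≤ (B^k / Real.sqrt k) * (B^(m+1-k) / Real.sqrt ((m+1-k:ℕ))) :=
                mul_le_mul h1 h2 (abs_nonneg _)
                  (div_nonneg (pow_nonneg hBnn k) hsk.le)
            _ = B^(m+1) * (1/(Real.sqrt k * Real.sqrt ((m+1-k:ℕ)))) := by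
                rw [div_mul_div_comm, ← pow_add,
                  (by omega : k + (m+1-k) = m+1), mul_one_div]
        -- bound the convolution sum
        have hconv := conv_le (m+1)
        have hsum : ∑ k ∈ Finset.Ico 1 (m+1), |a k * a (m+1-k)| ≤ B^(m+1) * 6 := by
          calc ∑ k ∈ Finset.Ico 1 (m+1), |a k * a (m+1-k)|
              ≤ ∑ k ∈ Finset.Ico 1 (m+1),
                  B^(m+1) * (1/(Real.sqrt k * Real.sqrt ((m+1-k:ℕ)))) :=
                Finset.sum_le_sum hNk
            _ = B^(m+1) * ∑ k ∈ Finset.Ico 1 (m+1),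
                  1/(Real.sqrt k * Real.sqrt ((m+1-k:ℕ))) := by rw [Finset.mul_sum]
            _ ≤ B^(m+1) * 6 :=
                mul_le_mul_of_nonneg_left hconv (pow_nonneg hBnn _)
        have ham1 : |a (m+1)| ≤ B^(m+1) := by
          have h := ih (m+1) (by omega) (by omega)
          have hs1 : (1:ℝ) ≤ Real.sqrt ((m+1:ℕ):ℝ) := by
            rw [show (1:ℝ) = Real.sqrt 1 from (Real.sqrt_one).symm]
            apply Real.sqrt_le_sqrt
            exact_mod_cast (by omega : 1 ≤ m+1)
          calc |a (m+1)| ≤ B^(m+1) / Real.sqrt ((m+1:ℕ):ℝ) := h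
            _ ≤ B^(m+1) / 1 :=
                div_le_div_of_nonneg_left (pow_nonneg hBnn _) (by norm_num) hs1
            _ = B^(m+1) := div_one _
        have hN : |d₂ * a (m+1) + ∑ k ∈ Finset.Ico 1 (m+1), a k * a (m+1-k)|
            ≤ (|d₂| + 6) * B^(m+1) := by
          calc |d₂ * a (m+1) + ∑ k ∈ Finset.Ico 1 (m+1), a k * a (m+1-k)|
              ≤ |d₂ * a (m+1)| + |∑ k ∈ Finset.Ico 1 (m+1), a k * a (m+1-k)| :=
                abs_add_le _ _
            _ ≤ |d₂| * |a (m+1)| + ∑ k ∈ Finset.Ico 1 (m+1), |a k * a (m+1-k)| := by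
                rw [abs_mul]
                exact add_le_add le_rfl (Finset.abs_sum_le_sum_abs _ _)
            _ ≤ |d₂| * B^(m+1) + B^(m+1) * 6 :=
                add_le_add (mul_le_mul_of_nonneg_left ham1 (abs_nonneg _)) hsum
            _ = (|d₂| + 6) * B^(m+1) := by ring
        -- combine
        rw [hrec, abs_div, abs_of_pos hvpos]
        have hd6 : (0:ℝ) ≤ |d₂| + 6 := by positivity
        calc |d₂ * a (m+1) + ∑ k ∈ Finset.Ico 1 (m+1), a k * a (m+1-k)| / v (m+2)
            ≤ ((|d₂| + 6) * B^(m+1)) / (Real.sqrt ((m+2:ℕ):ℝ) / 3) :=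
              div_le_div₀ (mul_nonneg hd6 (pow_nonneg hBnn _)) hN (by positivity) hvlb
          _ = (3 * (|d₂| + 6)) * B^(m+1) / Real.sqrt ((m+2:ℕ):ℝ) := by
              rw [div_div_eq_mul_div]
              ring
          _ ≤ B * B^(m+1) / Real.sqrt ((m+2:ℕ):ℝ) :=
              div_le_div₀ (mul_nonneg hBnn (pow_nonneg hBnn _))
                (mul_le_mul_of_nonneg_right hBd (pow_nonneg hBnn _)) htpos le_rfl
          _ = B^(m+2) / Real.sqrt ((m+2:ℕ):ℝ) := by
              rw [show B * B^(m+1) = B^(m+2) from (pow_succ' B (m+1)).symm]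
  constructor
  · refine ⟨B, hBpos, fun n hn => ?_⟩
    have h := key n hn
    have hn1 : (1:ℝ) ≤ (n:ℝ) := by exact_mod_cast hn
    have hs : (Real.sqrt n)⁻¹ ≤ (n:ℝ) ^ (α - 1) := by
      rw [Real.sqrt_eq_rpow, ← Real.rpow_neg (by linarith)]
      exact Real.rpow_le_rpow_of_exponent_le hn1 (by linarith)
    calc |a n| ≤ B ^ n / Real.sqrt n := h
      _ = B ^ n * (Real.sqrt n)⁻¹ := div_eq_mul_inv _ _
      _ ≤ B ^ n * (n:ℝ) ^ (α - 1) :=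
          mul_le_mul_of_nonneg_left hs (pow_nonneg hBnn n)
  · have hrpos : (0:ℝ) < 1/(2*B) := by
      apply div_pos one_pos
      linarith
    have hBne : B ≠ 0 := hBpos.ne'
    refine ⟨1/(2*B), hrpos, ?_⟩
    apply Summable.of_nonneg_of_le (f := fun n => (|a 0| + 1) * (1/2:ℝ)^n)
      (fun n => mul_nonneg (abs_nonneg _) (pow_nonneg hrpos.le n)) ?_ ?_
    · intro n
      rcases Nat.eq_zero_or_pos n with rfl | hn
      · simp
      · have h := key n hn
        have hn1 : (1:ℝ) ≤ (n:ℝ) := by exact_mod_cast hn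
        have hs1 : (1:ℝ) ≤ Real.sqrt n := by
          rw [show (1:ℝ) = Real.sqrt 1 from (Real.sqrt_one).symm]
          exact Real.sqrt_le_sqrt hn1
        calc |a n| * (1/(2*B))^n ≤ (B^n / Real.sqrt n) * (1/(2*B))^n :=
              mul_le_mul_of_nonneg_right h (pow_nonneg hrpos.le n)
          _ = ((1/2:ℝ)^n) / Real.sqrt n := by
              rw [div_mul_eq_mul_div, ← mul_pow]
              congr 2
              field_simp
          _ ≤ (1/2:ℝ)^n := div_le_self (by positivity) hs1
          _ ≤ (|a 0| + 1) * (1/2:ℝ)^n := by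
              apply le_mul_of_one_le_left (by positivity)
              linarith [abs_nonneg (a 0)]
    · exact (summable_geometric_of_lt_one (by norm_num) (by norm_num)).mul_left _
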